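/- arXiv:1803.05652 — 2 statements merged into one kernel-verified Lean document; each statement's English description precedes it below -/
import Mathlib

section
/- Let G be a DAG on [n] that is a δ-local expander, let T ⊆ [n], let 0 < α < δ/2, and let u be α-good under T. Then for every integer r ≥ 1: (i) whenever u + 2r − 1 ≤ n, for all X ⊆ [u, u+r−1] and Y ⊆ [u+r, u+2r−1] with |X| ≥ 2δr and |Y| ≥ 2δr there exist a ∈ X ∖ T and b ∈ Y ∖ T such that (a, b) is an edge of G; and (ii) whenever u − 2r + 1 ≥ 1, for all Y ⊆ [u−r+1, u] and Z ⊆ [u−2r+1, u−r] with |Y| ≥ 2δr and |Z| ≥ 2δr there exist a ∈ Z ∖ T and b ∈ Y ∖ T such that (a, b) is an edge of G. (That is, after deleting the nodes of T, G still has 2δ-local expansion around u.) -/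
/-- A node `v` is `α`-good under `T`: `v ∉ T` and for every radius `r ≥ 1`,
each of the intervals `[v-r+1, v]` and `[v, v+r-1]` contains at most `α·r`
elements of `T`. -/
def AlphaGood (T : Finset ℕ) (α : ℝ) (v : ℕ) : Prop :=
  v ∉ T ∧ ∀ r : ℕ, 1 ≤ r →
    ((Finset.Icc (v - r + 1) v ∩ T).card : ℝ) ≤ α * r ∧
    ((Finset.Icc v (v + r - 1) ∩ T).card : ℝ) ≤ α * r

/-- A DAG (edge relation `E` on `[n]`, edges go from smaller to larger) has
`δ`-local expansion around node `v`. -/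
def LocalExpansion (n : ℕ) (E : ℕ → ℕ → Prop) (δ : ℝ) (v : ℕ) : Prop :=
  ∀ r : ℕ, 1 ≤ r →
    (v + 2 * r - 1 ≤ n →
      ∀ W ⊆ Finset.Icc v (v + r - 1), ∀ X ⊆ Finset.Icc (v + r) (v + 2 * r - 1),
        δ * r ≤ (W.card : ℝ) → δ * r ≤ (X.card : ℝ) →
          ∃ a ∈ W, ∃ b ∈ X, E a b) ∧
    (2 * r ≤ v →
      ∀ Y ⊆ Finset.Icc (v - r + 1) v, ∀ Z ⊆ Finset.Icc (v - 2 * r + 1) (v - r),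
        δ * r ≤ (Y.card : ℝ) → δ * r ≤ (Z.card : ℝ) →
          ∃ a ∈ Z, ∃ b ∈ Y, E a b)

/-- If `G` is a `δ`-local expander, `0 < α < δ/2`, and `u` is `α`-good under `T`,
then after deleting the nodes of `T` the graph still has `2δ`-local
expansion around `u`. -/
theorem good_node_expansion_after_deletion (n : ℕ) (E : ℕ → ℕ → Prop)
    (hE : ∀ a b, E a b → 1 ≤ a ∧ a < b ∧ b ≤ n)
    (δ : ℝ) (hδ : 0 < δ)
    (hLE : ∀ v ∈ Finset.Icc 1 n, LocalExpansion n E δ v)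
    (T : Finset ℕ) (hT : T ⊆ Finset.Icc 1 n)
    (α : ℝ) (hα0 : 0 < α) (hα : α < δ / 2)
    (u : ℕ) (hu : u ∈ Finset.Icc 1 n) (hGood : AlphaGood T α u) :
    ∀ r : ℕ, 1 ≤ r →
      (u + 2 * r - 1 ≤ n →
        ∀ X ⊆ Finset.Icc u (u + r - 1), ∀ Y ⊆ Finset.Icc (u + r) (u + 2 * r - 1),
          2 * δ * r ≤ (X.card : ℝ) → 2 * δ * r ≤ (Y.card : ℝ) →
            ∃ a ∈ X, a ∉ T ∧ ∃ b ∈ Y, b ∉ T ∧ E a b) ∧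
      (2 * r ≤ u →
        ∀ Y ⊆ Finset.Icc (u - r + 1) u, ∀ Z ⊆ Finset.Icc (u - 2 * r + 1) (u - r),
          2 * δ * r ≤ (Y.card : ℝ) → 2 * δ * r ≤ (Z.card : ℝ) →
            ∃ a ∈ Z, a ∉ T ∧ ∃ b ∈ Y, b ∉ T ∧ E a b) := by
  intro r hr
  have hGr := hGood.2 r hr
  have hG2r := hGood.2 (2 * r) (by omega)
  have hLEu := hLE u hu r hr
  have hcast : ((2 * r : ℕ) : ℝ) = 2 * (r : ℝ) := by push_cast; ring
  have key : ∀ (s : Finset ℕ) (c : ℝ), 2 * δ * r ≤ s.card →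
      ((s ∩ T).card : ℝ) ≤ c → c ≤ δ * r → δ * r ≤ ((s \ T).card : ℝ) := by
    intro s c h1 h2 h3
    have := Finset.card_inter_add_card_sdiff s T
    have : ((s ∩ T).card : ℝ) + ((s \ T).card : ℝ) = s.card := by exact_mod_cast this
    linarith
  have hαδ : α * r ≤ δ * r := by
    have : (0:ℝ) ≤ r := Nat.cast_nonneg r
    nlinarith
  have hα2δ : α * (2 * r) ≤ δ * r := by
    have : (0:ℝ) ≤ r := Nat.cast_nonneg r
    nlinarith
  constructor
  · intro hn X hX Y hY hXc hYc
    have hXT : ((X ∩ T).card : ℝ) ≤ α * r := by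
      refine le_trans ?_ hGr.2
      exact_mod_cast Nat.cast_le.mpr (Finset.card_le_card (Finset.inter_subset_inter_right hX))
    have hYT : ((Y ∩ T).card : ℝ) ≤ α * (2 * r) := by
      have hsub : Y ∩ T ⊆ Finset.Icc u (u + 2 * r - 1) ∩ T := by
        refine Finset.inter_subset_inter_right (hY.trans (Finset.Icc_subset_Icc ?_ le_rfl))
        omega
      have := hG2r.2
      rw [hcast] at this
      calc ((Y ∩ T).card : ℝ) ≤ _ := Nat.cast_le.mpr (Finset.card_le_card hsub)
        _ ≤ α * (2 * r) := this
    obtain ⟨a, ha, b, hb, hab⟩ := (hLEu).1 hn (X \ T) ((Finset.sdiff_subset).trans hX)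
      (Y \ T) ((Finset.sdiff_subset).trans hY)
      (key X (α * r) hXc hXT hαδ) (key Y (α * (2 * r)) hYc hYT hα2δ)
    rw [Finset.mem_sdiff] at ha hb
    exact ⟨a, ha.1, ha.2, b, hb.1, hb.2, hab⟩
  · intro hn Y hY Z hZ hYc hZc
    have hYT : ((Y ∩ T).card : ℝ) ≤ α * r := by
      refine le_trans ?_ hGr.1
      exact_mod_cast Nat.cast_le.mpr (Finset.card_le_card (Finset.inter_subset_inter_right hY))
    have hZT : ((Z ∩ T).card : ℝ) ≤ α * (2 * r) := by
      have hsub : Z ∩ T ⊆ Finset.Icc (u - 2 * r + 1) u ∩ T := by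
        refine Finset.inter_subset_inter_right (hZ.trans (Finset.Icc_subset_Icc le_rfl ?_))
        omega
      have := hG2r.1
      rw [hcast] at this
      calc ((Z ∩ T).card : ℝ) ≤ _ := Nat.cast_le.mpr (Finset.card_le_card hsub)
        _ ≤ α * (2 * r) := this
    obtain ⟨a, ha, b, hb, hab⟩ := (hLEu).2 hn (Y \ T) ((Finset.sdiff_subset).trans hY)
      (Z \ T) ((Finset.sdiff_subset).trans hZ)
      (key Y (α * r) hYc hYT hαδ) (key Z (α * (2 * r)) hZc hZT hα2δ)
    rw [Finset.mem_sdiff] at ha hb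
    exact ⟨a, ha.1, ha.2, b, hb.1, hb.2, hab⟩
end

section
/- Let r ≥ 1 and u be such that the intervals A = [u, u+r−1] and B = [u+r, u+2r−1] lie inside [n]. Let E ⊆ A × B be a set of edges such that every vertex of A ∪ B is incident to at most d edges of E. Let T ⊆ [n], let 0 < α < 1, and suppose u is α-good under T. Then the number of edges of E incident to at least one vertex of T is at most 3αrd. -/
/-- If `u` is `α`-good under `T` and `E` is a set of edges between
`A = [u, u+r-1]` and `B = [u+r, u+2r-1]` in which every vertex is incident to
at most `d` edges, then at most `3αrd` edges of `E` are incident to `T`. -/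
theorem red_edges_bound (n u r d : ℕ) (hr : 1 ≤ r) (hu : 1 ≤ u)
    (hn : u + 2 * r - 1 ≤ n)
    (E : Finset (ℕ × ℕ))
    (hE : E ⊆ Finset.Icc u (u + r - 1) ×ˢ Finset.Icc (u + r) (u + 2 * r - 1))
    (hdeg : ∀ v : ℕ, (E.filter fun e => e.1 = v ∨ e.2 = v).card ≤ d)
    (T : Finset ℕ) (hT : T ⊆ Finset.Icc 1 n)
    (α : ℝ) (hα0 : 0 < α) (hα1 : α < 1)
    (hGood : AlphaGood T α u) :
    ((E.filter fun e => e.1 ∈ T ∨ e.2 ∈ T).card : ℝ) ≤ 3 * α * r * d := by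
  set S : Finset ℕ := Finset.Icc u (u + 2 * r - 1) ∩ T with hS
  have hsub : (E.filter fun e => e.1 ∈ T ∨ e.2 ∈ T) ⊆
      S.biUnion (fun v => E.filter fun e => e.1 = v ∨ e.2 = v) := by
    intro e he
    simp only [Finset.mem_filter] at he
    obtain ⟨heE, hT'⟩ := he
    have hmem := hE heE
    simp only [Finset.mem_product, Finset.mem_Icc] at hmem
    simp only [Finset.mem_biUnion, Finset.mem_filter, hS, Finset.mem_inter,
      Finset.mem_Icc]
    rcases hT' with h1 | h1
    · exact ⟨e.1, ⟨⟨hmem.1.1, hmem.1.2.trans (by omega)⟩, h1⟩, heE, Or.inl rfl⟩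
    · exact ⟨e.2, ⟨⟨le_trans (by omega) hmem.2.1, hmem.2.2⟩, h1⟩, heE, Or.inr rfl⟩
  have hcard : (E.filter fun e => e.1 ∈ T ∨ e.2 ∈ T).card ≤ S.card * d := by
    calc (E.filter fun e => e.1 ∈ T ∨ e.2 ∈ T).card
        ≤ (S.biUnion (fun v => E.filter fun e => e.1 = v ∨ e.2 = v)).card :=
          Finset.card_le_card hsub
      _ ≤ ∑ v ∈ S, (E.filter fun e => e.1 = v ∨ e.2 = v).card :=
          Finset.card_biUnion_le
      _ ≤ ∑ v ∈ S, d := Finset.sum_le_sum fun v _ => hdeg v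
      _ = S.card * d := by rw [Finset.sum_const, smul_eq_mul]
  have hSc : (S.card : ℝ) ≤ α * (2 * r) := by
    have := (hGood.2 (2 * r) (by omega)).2
    convert this using 3 <;> push_cast <;> ring
  have hd0 : (0:ℝ) ≤ d := Nat.cast_nonneg d
  calc ((E.filter fun e => e.1 ∈ T ∨ e.2 ∈ T).card : ℝ)
      ≤ (S.card : ℝ) * d := by exact_mod_cast hcard
    _ ≤ (α * (2 * r)) * d := mul_le_mul_of_nonneg_right hSc hd0
    _ ≤ 3 * α * r * d := by nlinarith [hα0.le, (Nat.cast_nonneg r : (0:ℝ) ≤ r)]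
end
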